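/- arXiv:2202.09329 — 2 statements merged into one kernel-verified Lean document; each statement's English description precedes it below -/
import Mathlib

section
/- Let K be a field, P ∈ K[x]^{m×n}, and s ∈ ℤ^n such that P is s-reduced, and let t = rdeg_s(P). Then for every k ≥ 1 and every Q ∈ K[x]^{k×m}, the s-leading matrix of the product satisfies lm_s(Q·P) = lm_t(Q) · lm_s(P). -/
open Polynomial Matrix

noncomputable section

variable {K : Type*} [Field K]

/-- Degree of a univariate polynomial, viewed in `ℤ ∪ {⊥}`. -/
def pdegZ (p : K[X]) : WithBot ℤ := p.degree.map (Nat.cast : ℕ → ℤ)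

/-- Shifted degree (`s`-degree) of a row vector. -/
def sdeg {n : ℕ} (s : Fin n → ℤ) (p : Fin n → K[X]) : WithBot ℤ :=
  Finset.univ.sup fun j => pdegZ (p j) + (s j : WithBot ℤ)

/-- `s`-leading matrix of `P`. -/
def leadMat {m n : ℕ} (s : Fin n → ℤ) (P : Matrix (Fin m) (Fin n) K[X]) :
    Matrix (Fin m) (Fin n) K :=
  Matrix.of fun i j =>
    if pdegZ (P i j) + (s j : WithBot ℤ) = sdeg s (P i) then (P i j).leadingCoeff else 0

/-- `P` is `s`-reduced: its `s`-leading matrix has full row rank. -/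
def IsShiftReduced {m n : ℕ} (s : Fin n → ℤ) (P : Matrix (Fin m) (Fin n) K[X]) : Prop :=
  (leadMat s P).rank = m

/-- `j` is the `s`-pivot index of the row `p`: the largest index where the `s`-degree is attained. -/
def IsPivotIndex {n : ℕ} (s : Fin n → ℤ) (p : Fin n → K[X]) (j : Fin n) : Prop :=
  pdegZ (p j) + (s j : WithBot ℤ) = sdeg s p ∧
  ∀ j', j < j' → pdegZ (p j') + (s j' : WithBot ℤ) ≠ sdeg s p

/-- `P` is in `s`-weak Popov form: no zero row and strictly increasing `s`-pivot indices. -/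
def IsWeakPopov {m n : ℕ} (s : Fin n → ℤ) (P : Matrix (Fin m) (Fin n) K[X]) : Prop :=
  (∀ i, P i ≠ 0) ∧ ∃ piv : Fin m → Fin n, StrictMono piv ∧ ∀ i, IsPivotIndex s (P i) (piv i)

/-- The rows of `Kb` form a basis of the left kernel of `F`. -/
def IsKernelBasis {ℓ m : ℕ} {β : Type*} [Fintype β]
    (Kb : Matrix (Fin ℓ) (Fin m) K[X]) (F : Matrix (Fin m) β K[X]) : Prop :=
  (∀ i, Kb i ᵥ* F = 0) ∧
  LinearIndependent K[X] (fun i : Fin ℓ => Kb i) ∧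
  ∀ p : Fin m → K[X], p ᵥ* F = 0 → ∃ u : Fin ℓ → K[X], p = u ᵥ* Kb

/-- Membership in the relation module `Rel_M(F)`. -/
def InRelModule {m n : ℕ} (M : Matrix (Fin n) (Fin n) K[X])
    (F : Matrix (Fin m) (Fin n) K[X]) (p : Fin m → K[X]) : Prop :=
  ∃ q : Fin n → K[X], p ᵥ* F = q ᵥ* M

/-- The rows of `A` form a basis of the relation module `Rel_M(F)`. -/
def IsRelationBasis {ℓ m n : ℕ} (M : Matrix (Fin n) (Fin n) K[X])
    (A : Matrix (Fin ℓ) (Fin m) K[X]) (F : Matrix (Fin m) (Fin n) K[X]) : Prop :=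
  (∀ i, InRelModule M F (A i)) ∧
  LinearIndependent K[X] (fun i : Fin ℓ => A i) ∧
  ∀ p : Fin m → K[X], InRelModule M F p → ∃ u : Fin ℓ → K[X], p = u ᵥ* A

/-- Rank of a polynomial matrix: its rank over the fraction field `K(x)`. -/
def polyRank {α β : Type*} [Fintype β] (F : Matrix α β K[X]) : ℕ :=
  (F.map (algebraMap K[X] (RatFunc K))).rank

/-- Lexicographic comparison of tuples. -/
def lexLE {r n : ℕ} (a b : Fin r → Fin n) : Prop :=
  ∀ i, (∀ k, k < i → a k = b k) → a i ≤ b i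

/-- `j` lists the column rank profile of `F`: the lexicographically smallest strictly
increasing tuple of `rank F` column indices selecting columns of full rank. -/
def IsColRankProfile {α : Type*} {n r : ℕ} (F : Matrix α (Fin n) K[X])
    (j : Fin r → Fin n) : Prop :=
  StrictMono j ∧ polyRank F = r ∧ polyRank (F.submatrix id j) = r ∧
  ∀ j' : Fin r → Fin n, StrictMono j' → polyRank (F.submatrix id j') = r → lexLE j j'


namespace StmtAux

def cZ (p : K[X]) (e : ℤ) : K := if 0 ≤ e then p.coeff e.toNat else 0

lemma pdegZ_zero : pdegZ (0 : K[X]) = ⊥ := by simp [pdegZ]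

lemma pdegZ_eq_bot {p : K[X]} : pdegZ p = ⊥ ↔ p = 0 := by
  simp [pdegZ, Polynomial.degree_eq_bot]

lemma wb_map_mono {a b : WithBot ℕ} (h : a ≤ b) :
    a.map (Nat.cast : ℕ → ℤ) ≤ b.map (Nat.cast : ℕ → ℤ) := by
  induction a using WithBot.recBotCoe with
  | bot => simp
  | coe x =>
    induction b using WithBot.recBotCoe with
    | bot => simp at h
    | coe y =>
      simp only [WithBot.map_coe, WithBot.coe_le_coe] at h ⊢
      exact_mod_cast h

lemma cZ_eq_zero_of_lt {p : K[X]} {e : ℤ} (h : pdegZ p < (e : WithBot ℤ)) : cZ p e = 0 := by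
  unfold cZ
  split_ifs with he
  · rcases eq_or_ne p 0 with rfl | hp
    · simp
    · apply Polynomial.coeff_eq_zero_of_degree_lt
      simp only [pdegZ, Polynomial.degree_eq_natDegree hp, Nat.cast_withBot, WithBot.map_coe,
        WithBot.coe_lt_coe] at h
      simp only [Polynomial.degree_eq_natDegree hp, Nat.cast_withBot, WithBot.coe_lt_coe]
      omega
  · rfl

lemma cZ_of_pdeg_eq {p : K[X]} {e : ℤ} (h : pdegZ p = (e : WithBot ℤ)) :
    cZ p e = p.leadingCoeff := by
  have hp : p ≠ 0 := by
    rintro rfl; simp [pdegZ] at h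
  simp only [pdegZ, Polynomial.degree_eq_natDegree hp, Nat.cast_withBot, WithBot.map_coe,
    WithBot.coe_inj] at h
  subst h
  unfold cZ
  rw [if_pos (Int.natCast_nonneg _), Int.toNat_natCast]
  rfl

lemma le_pdegZ_of_cZ_ne {p : K[X]} {e : ℤ} (h : cZ p e ≠ 0) :
    (e : WithBot ℤ) ≤ pdegZ p := by
  unfold cZ at h
  split_ifs at h with he
  · have := Polynomial.le_degree_of_ne_zero h
    have hp : p ≠ 0 := by rintro rfl; simp at h
    simp only [Polynomial.degree_eq_natDegree hp, Nat.cast_withBot, WithBot.coe_le_coe] at this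
    simp only [pdegZ, Polynomial.degree_eq_natDegree hp, Nat.cast_withBot, WithBot.map_coe,
      WithBot.coe_le_coe]
    omega
  · exact absurd rfl h

lemma cZ_sum {ι : Type*} (sf : Finset ι) (f : ι → K[X]) (e : ℤ) :
    cZ (∑ l ∈ sf, f l) e = ∑ l ∈ sf, cZ (f l) e := by
  unfold cZ
  split_ifs with he
  · simp [Polynomial.finset_sum_coeff]
  · simp

lemma pdegZ_mul (p q : K[X]) : pdegZ (p * q) = pdegZ p + pdegZ q := by
  unfold pdegZ
  rw [Polynomial.degree_mul]
  cases hp : p.degree with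
  | bot => simp
  | coe a =>
    cases hq : q.degree with
    | bot => simp
    | coe b => simp [← WithBot.coe_add]

lemma pdegZ_add_le (p q : K[X]) : pdegZ (p + q) ≤ max (pdegZ p) (pdegZ q) := by
  have h := Polynomial.degree_add_le p q
  rcases le_total p.degree q.degree with hle | hle
  · exact le_trans (wb_map_mono (h.trans (sup_le hle le_rfl))) le_sup_right
  · exact le_trans (wb_map_mono (h.trans (sup_le le_rfl hle))) le_sup_left

lemma pdegZ_sum_le {ι : Type*} {sf : Finset ι} {f : ι → K[X]} {b : WithBot ℤ}
    (h : ∀ l ∈ sf, pdegZ (f l) ≤ b) : pdegZ (∑ l ∈ sf, f l) ≤ b := by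
  induction sf using Finset.cons_induction with
  | empty => simp [pdegZ]
  | cons a s ha ih =>
    rw [Finset.sum_cons]
    exact le_trans (pdegZ_add_le _ _)
      (max_le (h a (by simp)) (ih fun l hl => h l (by simp [hl])))

lemma wb_add_coe_le {x : WithBot ℤ} {c D : ℤ} :
    x + (c : WithBot ℤ) ≤ (D : WithBot ℤ) ↔ x ≤ ((D - c : ℤ) : WithBot ℤ) := by
  induction x using WithBot.recBotCoe with
  | bot => simp
  | coe a =>
    rw [← WithBot.coe_add, WithBot.coe_le_coe, WithBot.coe_le_coe]
    omega

lemma wb_add_coe_eq {x : WithBot ℤ} {c D : ℤ} :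
    x + (c : WithBot ℤ) = (D : WithBot ℤ) ↔ x = ((D - c : ℤ) : WithBot ℤ) := by
  induction x using WithBot.recBotCoe with
  | bot => simp
  | coe a =>
    rw [← WithBot.coe_add, WithBot.coe_inj, WithBot.coe_inj]
    omega

lemma wb_coe_le_add {x : WithBot ℤ} {c D : ℤ} :
    ((D - c : ℤ) : WithBot ℤ) ≤ x ↔ (D : WithBot ℤ) ≤ x + (c : WithBot ℤ) := by
  induction x using WithBot.recBotCoe with
  | bot => simp
  | coe a =>
    rw [← WithBot.coe_add, WithBot.coe_le_coe, WithBot.coe_le_coe]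
    omega

lemma cZ_mul {p q : K[X]} {a b : ℤ} (ha : pdegZ p ≤ (a : WithBot ℤ))
    (hb : pdegZ q ≤ (b : WithBot ℤ)) :
    cZ (p * q) (a + b) = cZ p a * cZ q b := by
  rcases lt_or_eq_of_le ha with hlt | heq
  · rw [cZ_eq_zero_of_lt hlt, zero_mul]
    apply cZ_eq_zero_of_lt
    rw [pdegZ_mul]
    calc pdegZ p + pdegZ q ≤ pdegZ p + (b : WithBot ℤ) := add_le_add le_rfl hb
      _ < (a : WithBot ℤ) + (b : WithBot ℤ) := by
          apply WithBot.add_lt_add_right (WithBot.coe_ne_bot) hlt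
      _ = ((a + b : ℤ) : WithBot ℤ) := (WithBot.coe_add a b).symm
  · rcases lt_or_eq_of_le hb with hlt' | heq'
    · rw [cZ_eq_zero_of_lt hlt', mul_zero]
      apply cZ_eq_zero_of_lt
      rw [pdegZ_mul, heq]
      calc (a : WithBot ℤ) + pdegZ q < (a : WithBot ℤ) + (b : WithBot ℤ) :=
            WithBot.add_lt_add_left (WithBot.coe_ne_bot) hlt'
        _ = ((a + b : ℤ) : WithBot ℤ) := (WithBot.coe_add a b).symm
    · rw [cZ_of_pdeg_eq heq, cZ_of_pdeg_eq heq']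
      rw [cZ_of_pdeg_eq (by rw [pdegZ_mul, heq, heq', WithBot.coe_add]),
        Polynomial.leadingCoeff_mul]

lemma wb_add_coe_lt {x : WithBot ℤ} {c D : ℤ} :
    x + (c : WithBot ℤ) < (D : WithBot ℤ) ↔ x < ((D - c : ℤ) : WithBot ℤ) := by
  induction x using WithBot.recBotCoe with
  | bot => simp [WithBot.bot_lt_coe]
  | coe a =>
    rw [← WithBot.coe_add, WithBot.coe_lt_coe, WithBot.coe_lt_coe]
    omega

lemma rows_indep {m n : ℕ} {M : Matrix (Fin m) (Fin n) K} (h : M.rank = m)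
    {v : Fin m → K} (hv : v ᵥ* M = 0) : v = 0 := by
  have hli : LinearIndependent K (fun i : Fin m => M i) := by
    rw [linearIndependent_iff_card_eq_finrank_span]
    rw [M.rank_eq_finrank_span_row] at h
    simp [Set.finrank]
    exact h.symm
  have hsum : ∑ i, v i • M i = 0 := by
    funext j
    have h2 := congrFun hv j
    simpa [Matrix.vecMul, dotProduct, Finset.sum_apply] using h2
  exact funext fun i => Fintype.linearIndependent_iff.mp hli v hsum i

end StmtAux

lemma le_sdeg {K : Type*} [Field K] {n : ℕ} (s : Fin n → ℤ) (p : Fin n → K[X]) (j : Fin n) :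
    pdegZ (p j) + (s j : WithBot ℤ) ≤ sdeg s p :=
  Finset.le_sup (f := fun j => pdegZ (p j) + (s j : WithBot ℤ)) (Finset.mem_univ j)

lemma sdeg_le {K : Type*} [Field K] {n : ℕ} {s : Fin n → ℤ} {p : Fin n → K[X]} {b : WithBot ℤ}
    (h : ∀ j, pdegZ (p j) + (s j : WithBot ℤ) ≤ b) : sdeg s p ≤ b :=
  Finset.sup_le fun j _ => h j


/-- The `s`-leading matrix of a product with an `s`-reduced matrix. -/
theorem stmt1 {K : Type*} [Field K] {m n : ℕ}
    (P : Matrix (Fin m) (Fin n) K[X]) (s : Fin n → ℤ) (hred : IsShiftReduced s P)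
    (t : Fin m → ℤ) (ht : ∀ i, (t i : WithBot ℤ) = sdeg s (P i)) :
    ∀ k : ℕ, 1 ≤ k → ∀ Q : Matrix (Fin k) (Fin m) K[X],
      leadMat s (Q * P) = leadMat t Q * leadMat s P := by
  intro k hk Q
  ext i j
  rw [Matrix.mul_apply]
  by_cases hq0 : Q i = 0
  · have hrow : ∀ j', (Q * P) i j' = 0 := by
      intro j'
      rw [Matrix.mul_apply]
      simp [congrFun hq0]
    have h1 : leadMat s (Q * P) i j = 0 := by
      simp [leadMat, hrow, pdegZ, sdeg]
    rw [h1]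
    symm
    apply Finset.sum_eq_zero
    intro l _
    simp [leadMat, congrFun hq0 l]
  · -- main case
    obtain ⟨l₀, hl₀⟩ : ∃ l, Q i l ≠ 0 := by
      by_contra hc
      push_neg at hc
      exact hq0 (funext hc)
    have hbot : sdeg t (Q i) ≠ ⊥ := by
      intro hb
      have hle := le_sdeg t (Q i) l₀
      rw [hb, le_bot_iff, WithBot.add_eq_bot] at hle
      rcases hle with h | h
      · exact hl₀ (StmtAux.pdegZ_eq_bot.mp h)
      · exact WithBot.coe_ne_bot h
    obtain ⟨D, hD⟩ := WithBot.ne_bot_iff_exists.mp hbot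
    have hQle : ∀ l, pdegZ (Q i l) ≤ ((D - t l : ℤ) : WithBot ℤ) := by
      intro l
      rw [← StmtAux.wb_add_coe_le, hD]
      exact le_sdeg t (Q i) l
    have hPle : ∀ l (j' : Fin n), pdegZ (P l j') ≤ ((t l - s j' : ℤ) : WithBot ℤ) := by
      intro l j'
      rw [← StmtAux.wb_add_coe_le, ht l]
      exact le_sdeg s (P l) j'
    have key : ∀ j' : Fin n, StmtAux.cZ (∑ l, Q i l * P l j') (D - s j') =
        ∑ l, leadMat t Q i l * leadMat s P l j' := by
      intro j'
      rw [StmtAux.cZ_sum]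
      refine Finset.sum_congr rfl fun l _ => ?_
      have hsplit : (D - s j' : ℤ) = (D - t l) + (t l - s j') := by ring
      rw [hsplit, StmtAux.cZ_mul (hQle l) (hPle l j')]
      congr 1
      · show _ = if pdegZ (Q i l) + ((t l : ℤ) : WithBot ℤ) = sdeg t (Q i)
            then (Q i l).leadingCoeff else 0
        split_ifs with hc
        · exact StmtAux.cZ_of_pdeg_eq (StmtAux.wb_add_coe_eq.mp (hc.trans hD.symm))
        · apply StmtAux.cZ_eq_zero_of_lt
          rw [← StmtAux.wb_add_coe_lt]
          exact lt_of_le_of_ne ((le_sdeg t (Q i) l).trans_eq hD.symm)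
            (fun h => hc (h.trans hD))
      · show _ = if pdegZ (P l j') + ((s j' : ℤ) : WithBot ℤ) = sdeg s (P l)
            then (P l j').leadingCoeff else 0
        split_ifs with hc
        · exact StmtAux.cZ_of_pdeg_eq (StmtAux.wb_add_coe_eq.mp (hc.trans (ht l).symm))
        · apply StmtAux.cZ_eq_zero_of_lt
          rw [← StmtAux.wb_add_coe_lt]
          exact lt_of_le_of_ne ((le_sdeg s (P l) j').trans_eq (ht l).symm)
            (fun h => hc (h.trans (ht l)))
    have bound : ∀ j' : Fin n, pdegZ (∑ l, Q i l * P l j') ≤ ((D - s j' : ℤ) : WithBot ℤ) := by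
      intro j'
      apply StmtAux.pdegZ_sum_le
      intro l _
      rw [StmtAux.pdegZ_mul]
      calc pdegZ (Q i l) + pdegZ (P l j')
          ≤ ((D - t l : ℤ) : WithBot ℤ) + ((t l - s j' : ℤ) : WithBot ℤ) :=
            add_le_add (hQle l) (hPle l j')
        _ = ((D - s j' : ℤ) : WithBot ℤ) := by
            rw [← WithBot.coe_add]
            congr 1
            ring
    have hQProw : ∀ j' : Fin n, (Q * P) i j' = ∑ l, Q i l * P l j' :=
      fun j' => Matrix.mul_apply
    have hsle : sdeg s ((Q * P) i) ≤ (D : WithBot ℤ) := by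
      apply sdeg_le
      intro j'
      rw [hQProw j', StmtAux.wb_add_coe_le]
      exact bound j'
    have hv : ∃ j' : Fin n, (∑ l, leadMat t Q i l * leadMat s P l j') ≠ 0 := by
      by_contra hc
      push_neg at hc
      have hvz : (fun l => leadMat t Q i l) ᵥ* leadMat s P = 0 := by
        funext j'
        simpa [Matrix.vecMul, dotProduct] using hc j'
      have hz := StmtAux.rows_indep hred hvz
      have : Nonempty (Fin m) := ⟨l₀⟩
      obtain ⟨l₁, -, hl₁⟩ := Finset.exists_mem_eq_sup Finset.univ Finset.univ_nonempty
        (fun l => pdegZ (Q i l) + ((t l : ℤ) : WithBot ℤ))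
      have hceq : pdegZ (Q i l₁) + ((t l₁ : ℤ) : WithBot ℤ) = sdeg t (Q i) := hl₁.symm
      have hne : Q i l₁ ≠ 0 := by
        intro h0
        rw [h0, StmtAux.pdegZ_zero, ← hD] at hceq
        simp at hceq
      have hentry : leadMat t Q i l₁ = (Q i l₁).leadingCoeff := if_pos hceq
      have hz1 := congrFun hz l₁
      rw [hentry] at hz1
      exact Polynomial.leadingCoeff_ne_zero.mpr hne hz1
    obtain ⟨j₀, hj₀⟩ := hv
    have hge : (D : WithBot ℤ) ≤ sdeg s ((Q * P) i) := by
      have hne0 : StmtAux.cZ (∑ l, Q i l * P l j₀) (D - s j₀) ≠ 0 := by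
        rw [key j₀]
        exact hj₀
      have h1 := StmtAux.le_pdegZ_of_cZ_ne hne0
      rw [StmtAux.wb_coe_le_add] at h1
      exact h1.trans (by rw [← hQProw j₀]; exact le_sdeg s ((Q * P) i) j₀)
    have hsdeg : sdeg s ((Q * P) i) = (D : WithBot ℤ) := le_antisymm hsle hge
    show (if pdegZ ((Q * P) i j) + ((s j : ℤ) : WithBot ℤ) = sdeg s ((Q * P) i)
        then ((Q * P) i j).leadingCoeff else 0) = _
    rw [← key j, hsdeg]
    split_ifs with hc
    · rw [← hQProw j]
      exact (StmtAux.cZ_of_pdeg_eq (StmtAux.wb_add_coe_eq.mp hc)).symm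
    · symm
      rw [← hQProw j]
      apply StmtAux.cZ_eq_zero_of_lt
      rw [← StmtAux.wb_add_coe_lt]
      refine lt_of_le_of_ne ?_ hc
      rw [hQProw j, StmtAux.wb_add_coe_le]
      exact bound j


end
end

section
/- Let K be a field, P ∈ K[x]^{m×n}, and s ∈ ℤ^n such that P is in s-reduced form. Let t = rdeg_s(P) ∈ ℤ^m, and let Q ∈ K[x]^{k×m} be in t-reduced form. Then the product Q·P is in s-reduced form. -/
open Polynomial Matrix

noncomputable section

variable {K : Type*} [Field K]

/-- integer-indexed coefficient -/
def coeffZ (p : K[X]) (a : ℤ) : K := if 0 ≤ a then p.coeff a.toNat else 0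

lemma pdegZ_zero : pdegZ (0 : K[X]) = ⊥ := by simp [pdegZ]

lemma pdegZ_of_ne (p : K[X]) (h : p ≠ 0) :
    pdegZ p = ((p.natDegree : ℤ) : WithBot ℤ) := by
  rw [pdegZ, degree_eq_natDegree h]
  rfl

lemma coeffZ_zero_of_lt {p : K[X]} {a : ℤ} (h : pdegZ p < (a : WithBot ℤ)) :
    coeffZ p a = 0 := by
  rcases eq_or_ne p 0 with rfl | hp
  · simp [coeffZ]
  · rw [pdegZ_of_ne p hp, WithBot.coe_lt_coe] at h
    have h0 : 0 ≤ a := le_trans (Int.ofNat_nonneg _) h.le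
    rw [coeffZ, if_pos h0]
    apply coeff_eq_zero_of_natDegree_lt
    omega

lemma coeffZ_of_eq {p : K[X]} {a : ℤ} (h : pdegZ p = (a : WithBot ℤ)) :
    coeffZ p a = p.leadingCoeff := by
  have hp : p ≠ 0 := by rintro rfl; rw [pdegZ_zero] at h; exact absurd h (by simp)
  rw [pdegZ_of_ne p hp, WithBot.coe_eq_coe] at h
  rw [coeffZ, if_pos (h ▸ Int.ofNat_nonneg _), leadingCoeff]
  congr 1
  omega

lemma coeffZ_of_le {p : K[X]} {a : ℤ} (h : pdegZ p ≤ (a : WithBot ℤ)) :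
    coeffZ p a = if pdegZ p = (a : WithBot ℤ) then p.leadingCoeff else 0 := by
  rcases lt_or_eq_of_le h with h' | h'
  · rw [coeffZ_zero_of_lt h', if_neg (ne_of_lt h')]
  · rw [coeffZ_of_eq h', if_pos h']

lemma le_pdegZ_of_coeffZ_ne {p : K[X]} {a : ℤ} (h : coeffZ p a ≠ 0) :
    (a : WithBot ℤ) ≤ pdegZ p := by
  by_contra hc
  exact h (coeffZ_zero_of_lt (lt_of_not_ge hc))

lemma pdegZ_mul (p q : K[X]) : pdegZ (p * q) = pdegZ p + pdegZ q := by
  rcases eq_or_ne p 0 with rfl | hp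
  · simp [pdegZ_zero]
  rcases eq_or_ne q 0 with rfl | hq
  · simp [pdegZ_zero]
  rw [pdegZ_of_ne _ hp, pdegZ_of_ne _ hq, pdegZ_of_ne _ (mul_ne_zero hp hq),
    natDegree_mul hp hq]
  push_cast
  norm_cast

lemma wb_add_le {x y : WithBot ℤ} {a b : ℤ} (hx : x ≤ (a : WithBot ℤ))
    (hy : y ≤ (b : WithBot ℤ)) : x + y ≤ ((a + b : ℤ) : WithBot ℤ) := by
  calc x + y ≤ (a : WithBot ℤ) + (b : WithBot ℤ) := add_le_add hx hy
  _ = ((a + b : ℤ) : WithBot ℤ) := (WithBot.coe_add a b).symm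

lemma wb_add_lt {x y : WithBot ℤ} {a b : ℤ} (hx : x < (a : WithBot ℤ))
    (hy : y ≤ (b : WithBot ℤ)) : x + y < ((a + b : ℤ) : WithBot ℤ) := by
  cases x with
  | bot => rw [WithBot.bot_add]; exact WithBot.bot_lt_coe _
  | coe x =>
    cases y with
    | bot => rw [WithBot.add_bot]; exact WithBot.bot_lt_coe _
    | coe y =>
      rw [WithBot.coe_lt_coe] at hx
      rw [WithBot.coe_le_coe] at hy
      rw [← WithBot.coe_add, WithBot.coe_lt_coe]
      omega

lemma coeffZ_mul {p q : K[X]} {a b : ℤ} (hp : pdegZ p ≤ (a : WithBot ℤ))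
    (hq : pdegZ q ≤ (b : WithBot ℤ)) :
    pdegZ (p * q) ≤ ((a + b : ℤ) : WithBot ℤ) ∧
      coeffZ (p * q) (a + b) = coeffZ p a * coeffZ q b := by
  refine ⟨by rw [pdegZ_mul]; exact wb_add_le hp hq, ?_⟩
  rcases lt_or_eq_of_le hp with hp' | hp'
  · rw [coeffZ_zero_of_lt hp', zero_mul, coeffZ_zero_of_lt]
    rw [pdegZ_mul]; exact wb_add_lt hp' hq
  rcases lt_or_eq_of_le hq with hq' | hq'
  · rw [coeffZ_zero_of_lt hq', mul_zero, coeffZ_zero_of_lt]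
    rw [pdegZ_mul, add_comm (pdegZ p), Int.add_comm a b]
    exact wb_add_lt hq' hp'.le
  · rw [coeffZ_of_eq hp', coeffZ_of_eq hq', coeffZ_of_eq, leadingCoeff_mul]
    rw [pdegZ_mul, hp', hq', WithBot.coe_add]

lemma coeffZ_sum {ι : Type*} (s : Finset ι) (f : ι → K[X]) (a : ℤ) :
    coeffZ (∑ i ∈ s, f i) a = ∑ i ∈ s, coeffZ (f i) a := by
  unfold coeffZ
  split
  · simp [finset_sum_coeff]
  · simp

lemma pdegZ_mono {p q : K[X]} (h : p.degree ≤ q.degree) : pdegZ p ≤ pdegZ q := by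
  unfold pdegZ
  cases hp : p.degree with
  | bot => simp
  | coe dd =>
    cases hq : q.degree with
    | bot => rw [hp, hq] at h; exact absurd h (by simp)
    | coe e =>
      rw [hp, hq, WithBot.coe_le_coe] at h
      rw [WithBot.map_coe, WithBot.map_coe, WithBot.coe_le_coe]
      exact_mod_cast h

lemma pdegZ_add_le (p q : K[X]) {a : ℤ} (hp : pdegZ p ≤ (a : WithBot ℤ))
    (hq : pdegZ q ≤ (a : WithBot ℤ)) : pdegZ (p + q) ≤ (a : WithBot ℤ) := by
  rcases le_total p.degree q.degree with h | h
  · exact le_trans (pdegZ_mono (le_trans (degree_add_le p q) (max_le h (le_refl _)))) hq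
  · exact le_trans (pdegZ_mono (le_trans (degree_add_le p q) (max_le (le_refl _) h))) hp

lemma pdegZ_sum_le {ι : Type*} (s : Finset ι) (f : ι → K[X]) (a : ℤ)
    (h : ∀ i ∈ s, pdegZ (f i) ≤ (a : WithBot ℤ)) :
    pdegZ (∑ i ∈ s, f i) ≤ (a : WithBot ℤ) := by
  classical
  induction s using Finset.induction with
  | empty => simp [pdegZ_zero]
  | @insert i s' hni ih =>
    rw [Finset.sum_insert hni]
    exact pdegZ_add_le _ _ (h i (Finset.mem_insert_self _ _))
      (ih fun j hj => h j (Finset.mem_insert_of_mem hj))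

lemma wb_shift_le {x : WithBot ℤ} {c e : ℤ} :
    x + (c : WithBot ℤ) ≤ (e : WithBot ℤ) ↔ x ≤ ((e - c : ℤ) : WithBot ℤ) := by
  cases x with
  | bot => simp
  | coe x =>
    rw [← WithBot.coe_add, WithBot.coe_le_coe, WithBot.coe_le_coe]
    omega

lemma wb_shift_eq {x : WithBot ℤ} {c e : ℤ} :
    x + (c : WithBot ℤ) = (e : WithBot ℤ) ↔ x = ((e - c : ℤ) : WithBot ℤ) := by
  cases x with
  | bot => simp
  | coe x =>
    rw [← WithBot.coe_add, WithBot.coe_eq_coe, WithBot.coe_eq_coe]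
    omega

lemma rank_full_iff {k m : ℕ} (A : Matrix (Fin k) (Fin m) K) :
    A.rank = k ↔ LinearIndependent K (fun i => A i) := by
  constructor
  · intro h
    rw [Matrix.rank_eq_finrank_span_row] at h
    rw [linearIndependent_iff_card_eq_finrank_span, Set.finrank, Fintype.card_fin]
    exact h.symm
  · intro h
    rw [h.rank_matrix, Fintype.card_fin]

/-- Products of shifted reduced matrices are shifted reduced. -/
theorem stmt2 {K : Type*} [Field K] {m n k : ℕ}
    (P : Matrix (Fin m) (Fin n) K[X]) (s : Fin n → ℤ) (hP : IsShiftReduced s P)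
    (t : Fin m → ℤ) (ht : ∀ i, (t i : WithBot ℤ) = sdeg s (P i))
    (Q : Matrix (Fin k) (Fin m) K[X]) (hQ : IsShiftReduced t Q) :
    IsShiftReduced s (Q * P) := by
  classical
  have hQl : LinearIndependent K (fun i => leadMat t Q i) := (rank_full_iff _).mp hQ
  have hPl : LinearIndependent K (fun i => leadMat s P i) := (rank_full_iff _).mp hP
  have hinj : Function.Injective (leadMat s P).vecMulLinear := by
    rw [Matrix.coe_vecMulLinear]; exact Matrix.vecMul_injective_iff.mpr hPl
  have hcomp : (fun i => (leadMat t Q * leadMat s P) i)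
      = (leadMat s P).vecMulLinear ∘ (fun i => leadMat t Q i) := by
    funext i
    funext j
    simp [Matrix.mul_apply, Matrix.vecMul, dotProduct]
  have hprod : LinearIndependent K (fun i => (leadMat t Q * leadMat s P) i) := by
    rw [hcomp]; exact hQl.map' _ (LinearMap.ker_eq_bot.mpr hinj)
  have hd : ∀ i : Fin k, ∃ dd : ℤ, sdeg t (Q i) = (dd : WithBot ℤ) := by
    intro i
    have hne : leadMat t Q i ≠ 0 := hQl.ne_zero i
    obtain ⟨l, hl⟩ : ∃ l, leadMat t Q i l ≠ 0 := by
      by_contra hc; push_neg at hc; exact hne (funext hc)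
    simp only [leadMat, Matrix.of_apply] at hl
    split at hl
    case isTrue h =>
      have hq0 : Q i l ≠ 0 := fun h0 => hl (by simp [h0])
      refine ⟨(Q i l).natDegree + t l, ?_⟩
      rw [← h, pdegZ_of_ne _ hq0, WithBot.coe_add]
    case isFalse => exact absurd rfl hl
  choose d hdspec using hd
  have hQb : ∀ i l, pdegZ (Q i l) ≤ ((d i - t l : ℤ) : WithBot ℤ) := by
    intro i l
    rw [← wb_shift_le, ← hdspec i]
    exact Finset.le_sup (f := fun j => pdegZ (Q i j) + (t j : WithBot ℤ))
      (Finset.mem_univ l)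
  have hPb : ∀ l j, pdegZ (P l j) ≤ ((t l - s j : ℤ) : WithBot ℤ) := by
    intro l j
    rw [← wb_shift_le, ht l]
    exact Finset.le_sup (f := fun j => pdegZ (P l j) + (s j : WithBot ℤ))
      (Finset.mem_univ j)
  have key : ∀ i j, pdegZ ((Q * P) i j) ≤ ((d i - s j : ℤ) : WithBot ℤ) ∧
      coeffZ ((Q * P) i j) (d i - s j) = (leadMat t Q * leadMat s P) i j := by
    intro i j
    have hentry : (Q * P) i j = ∑ l, Q i l * P l j := Matrix.mul_apply
    have hterm : ∀ l, pdegZ (Q i l * P l j) ≤ ((d i - s j : ℤ) : WithBot ℤ) ∧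
        coeffZ (Q i l * P l j) (d i - s j)
          = coeffZ (Q i l) (d i - t l) * coeffZ (P l j) (t l - s j) := by
      intro l
      have he : d i - t l + (t l - s j) = d i - s j := by ring
      have := coeffZ_mul (hQb i l) (hPb l j)
      rw [he] at this
      exact this
    refine ⟨by rw [hentry]; exact pdegZ_sum_le _ _ _ (fun l _ => (hterm l).1), ?_⟩
    rw [hentry, coeffZ_sum, Matrix.mul_apply]
    refine Finset.sum_congr rfl (fun l _ => ?_)
    rw [(hterm l).2]
    congr 1
    · rw [coeffZ_of_le (hQb i l)]
      simp only [leadMat, Matrix.of_apply]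
      have hcond : (pdegZ (Q i l) = ((d i - t l : ℤ) : WithBot ℤ)) ↔
          (pdegZ (Q i l) + (t l : WithBot ℤ) = sdeg t (Q i)) := by
        rw [hdspec i, wb_shift_eq]
      by_cases hc : pdegZ (Q i l) + (t l : WithBot ℤ) = sdeg t (Q i)
      · rw [if_pos (hcond.mpr hc), if_pos hc]
      · rw [if_neg (fun h => hc (hcond.mp h)), if_neg hc]
    · rw [coeffZ_of_le (hPb l j)]
      simp only [leadMat, Matrix.of_apply]
      have hcond : (pdegZ (P l j) = ((t l - s j : ℤ) : WithBot ℤ)) ↔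
          (pdegZ (P l j) + (s j : WithBot ℤ) = sdeg s (P l)) := by
        rw [← ht l, wb_shift_eq]
      by_cases hc : pdegZ (P l j) + (s j : WithBot ℤ) = sdeg s (P l)
      · rw [if_pos (hcond.mpr hc), if_pos hc]
      · rw [if_neg (fun h => hc (hcond.mp h)), if_neg hc]
  have hlead : leadMat s (Q * P) = leadMat t Q * leadMat s P := by
    ext i j
    obtain ⟨j0, hj0⟩ : ∃ j0, (leadMat t Q * leadMat s P) i j0 ≠ 0 := by
      have hne := hprod.ne_zero i
      by_contra hc; push_neg at hc; exact hne (funext hc)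
    have h1 : pdegZ ((Q * P) i j0) = ((d i - s j0 : ℤ) : WithBot ℤ) :=
      le_antisymm (key i j0).1
        (le_pdegZ_of_coeffZ_ne (by rw [(key i j0).2]; exact hj0))
    have hsd : sdeg s ((Q * P) i) = (d i : WithBot ℤ) := by
      apply le_antisymm
      · apply Finset.sup_le
        intro jj _
        rw [wb_shift_le]
        exact (key i jj).1
      · have : (d i : WithBot ℤ) = pdegZ ((Q * P) i j0) + (s j0 : WithBot ℤ) := by
          rw [h1, ← WithBot.coe_add]
          congr 1
          ring
        rw [this]
        exact Finset.le_sup (f := fun j => pdegZ ((Q * P) i j) + (s j : WithBot ℤ))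
          (Finset.mem_univ j0)
    rw [← (key i j).2]
    simp only [leadMat, Matrix.of_apply]
    rw [coeffZ_of_le (key i j).1, hsd]
    have hcond : (pdegZ ((Q * P) i j) + (s j : WithBot ℤ) = (d i : WithBot ℤ)) ↔
        (pdegZ ((Q * P) i j) = ((d i - s j : ℤ) : WithBot ℤ)) := wb_shift_eq
    by_cases hc : pdegZ ((Q * P) i j) + (s j : WithBot ℤ) = (d i : WithBot ℤ)
    · rw [if_pos hc, if_pos (hcond.mp hc)]
    · rw [if_neg hc, if_neg (fun h => hc (hcond.mpr h))]
  rw [IsShiftReduced, hlead]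
  exact (rank_full_iff _).mpr hprod

end
end
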